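/- Let n_e ∈ C¹(ℝ) satisfy n_e'(φ) < 0 for all φ ∈ ℝ. Let ρ : [0,∞) → ℝ be continuous and bounded, let Φ_b > 0, and let Φ : [0,∞) → ℝ be a bounded C² function satisfying ∂_{xx}Φ(x) = ρ(x) − n_e(Φ(x)) for x > 0, Φ(0) = Φ_b, lim_{x→∞} Φ(x) = 0, and ∂_xΦ ∈ L²(0,∞). Then: (i) for every M₁ ≥ Φ_b with n_e(M₁) ≤ inf_{x ≥ 0} ρ(x), one has Φ(x) ≤ M₁ for all x ≥ 0; and (ii) for every M₂ ≥ 0 with n_e(−M₂) ≥ sup_{x ≥ 0} ρ(x), one has Φ(x) ≥ −M₂ for all x ≥ 0. -/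
import Mathlib


open MeasureTheory Real Set Filter

/-- Auxiliary maximum principle: if `Φ` is `C²`, `Φ 0 ≤ M`, `Φ → 0` at `+∞`,
`0 ≤ M`, and `Φ'' > 0` wherever `Φ > M` on `(0,∞)`, then `Φ ≤ M` on `[0,∞)`. -/
lemma aux_max_principle (Φ : ℝ → ℝ) (hΦ : ContDiff ℝ 2 Φ) (M : ℝ)
    (hM0 : 0 ≤ M) (h0 : Φ 0 ≤ M) (hlim : Tendsto Φ atTop (nhds 0))
    (hforce : ∀ x > (0:ℝ), M < Φ x → 0 < deriv (deriv Φ) x) :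
    ∀ x ≥ (0:ℝ), Φ x ≤ M := by
  by_contra h
  push_neg at h
  obtain ⟨x₀, hx₀, hx₀M⟩ := h
  have hΦc : Continuous Φ := hΦ.continuous
  have hΦ'c : Continuous (deriv Φ) := hΦ.continuous_deriv one_le_two
  have hx₀pos : 0 < Φ x₀ := lt_of_le_of_lt hM0 hx₀M
  -- eventually Φ x < Φ x₀
  have hev : ∀ᶠ x in atTop, Φ x < Φ x₀ := hlim.eventually_lt_const hx₀pos
  obtain ⟨R₀, hR₀⟩ := eventually_atTop.1 hev
  set R := max R₀ x₀ with hR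
  have hRx₀ : x₀ ≤ R := le_max_right _ _
  have hRge : ∀ x ≥ R, Φ x < Φ x₀ := fun x hx => hR₀ x (le_trans (le_max_left _ _) hx)
  have hR0 : (0:ℝ) ≤ R := le_trans hx₀ hRx₀
  -- max of Φ on [0,R]
  obtain ⟨xs, hxsmem, hxsmax⟩ :=
    (isCompact_Icc (a := (0:ℝ)) (b := R)).exists_isMaxOn ⟨0, le_refl 0, hR0⟩
      (hΦc.continuousOn)
  have hxsge : Φ x₀ ≤ Φ xs := hxsmax ⟨hx₀, hRx₀⟩
  have hxsM : M < Φ xs := lt_of_lt_of_le hx₀M hxsge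
  -- global max
  have hglob : ∀ y ≥ (0:ℝ), Φ y ≤ Φ xs := by
    intro y hy
    rcases le_or_gt y R with hyR | hyR
    · exact hxsmax ⟨hy, hyR⟩
    · exact le_trans (le_of_lt (hRge y hyR.le)) hxsge
  have hxspos : 0 < xs := by
    rcases lt_or_eq_of_le hxsmem.1 with h | h
    · exact h
    · exfalso; rw [← h] at hxsM; exact absurd h0 (not_le.mpr hxsM)
  -- find δ with Φ > M on [xs, xs + δ]
  obtain ⟨δ, hδpos, hδ⟩ := Metric.continuousAt_iff.1 hΦc.continuousAt (Φ xs - M)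
    (by linarith)
  set b := xs + δ / 2 with hb
  have hxb : xs < b := by simp [hb]; linarith
  have hIcc : ∀ y ∈ Set.Icc xs b, M < Φ y := by
    intro y hy
    have hdist : dist y xs < δ := by
      rw [Real.dist_eq, abs_of_nonneg (by linarith [hy.1])]
      have := hy.2; simp only [hb] at this; linarith
    have := hδ hdist
    rw [Real.dist_eq, abs_lt] at this
    linarith [this.1]
  -- deriv Φ xs = 0 from local max
  have hloc : IsLocalMax Φ xs := by
    have : ∀ᶠ y in nhds xs, 0 < y := eventually_gt_nhds hxspos
    exact this.mono fun y hy => hglob y hy.le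
  have hderiv0 : deriv Φ xs = 0 := hloc.deriv_eq_zero
  -- deriv Φ strictly monotone on [xs, b]
  have hmono' : StrictMonoOn (deriv Φ) (Set.Icc xs b) := by
    apply strictMonoOn_of_deriv_pos (convex_Icc _ _) hΦ'c.continuousOn
    intro x hx
    rw [interior_Icc] at hx
    exact hforce x (lt_trans hxspos hx.1) (hIcc x ⟨hx.1.le, hx.2.le⟩)
  have hderivpos : ∀ x ∈ Set.Ioo xs b, 0 < deriv Φ x := by
    intro x hx
    have := hmono' (Set.left_mem_Icc.2 hxb.le) ⟨hx.1.le, hx.2.le⟩ hx.1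
    rwa [hderiv0] at this
  have hmono : StrictMonoOn Φ (Set.Icc xs b) := by
    apply strictMonoOn_of_deriv_pos (convex_Icc _ _) hΦc.continuousOn
    intro x hx
    rw [interior_Icc] at hx
    exact hderivpos x hx
  have : Φ xs < Φ b :=
    hmono (Set.left_mem_Icc.2 hxb.le) (Set.right_mem_Icc.2 hxb.le) hxb
  have : Φ b ≤ Φ xs := hglob b (by linarith [hxspos.le])
  linarith

theorem potential_bounds
    (ne : ℝ → ℝ) (hne : ContDiff ℝ 1 ne) (hne' : ∀ φ, deriv ne φ < 0)
    (ρ : ℝ → ℝ) (hρc : Continuous ρ) (hρb : ∃ B, ∀ x ≥ (0:ℝ), |ρ x| ≤ B)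
    (Φb : ℝ) (hΦb : 0 < Φb)
    (Φ : ℝ → ℝ) (hΦ : ContDiff ℝ 2 Φ) (hΦbdd : ∃ B, ∀ x ≥ (0:ℝ), |Φ x| ≤ B)
    (heq : ∀ x > (0:ℝ), deriv (deriv Φ) x = ρ x - ne (Φ x))
    (h0 : Φ 0 = Φb) (hlim : Tendsto Φ atTop (nhds 0))
    (hL2 : Integrable (fun x => (deriv Φ x)^2) (volume.restrict (Set.Ioi 0))) :
    (∀ M₁ : ℝ, Φb ≤ M₁ → (∀ x ≥ (0:ℝ), ne M₁ ≤ ρ x) → ∀ x ≥ (0:ℝ), Φ x ≤ M₁) ∧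
    (∀ M₂ : ℝ, 0 ≤ M₂ → (∀ x ≥ (0:ℝ), ρ x ≤ ne (-M₂)) → ∀ x ≥ (0:ℝ), -M₂ ≤ Φ x) := by
  have hanti : StrictAnti ne := by
    apply strictAnti_of_deriv_neg hne'
  constructor
  · intro M₁ hM₁ hρM₁ x hx
    apply aux_max_principle Φ hΦ M₁ (le_of_lt (lt_of_lt_of_le hΦb hM₁))
      (h0 ▸ hM₁) hlim _ x hx
    intro y hy hMy
    rw [heq y hy]
    have h1 : ne (Φ y) < ne M₁ := hanti hMy
    have h2 : ne M₁ ≤ ρ y := hρM₁ y hy.le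
    linarith
  · intro M₂ hM₂ hρM₂ x hx
    have key : ∀ x ≥ (0:ℝ), (fun z => -Φ z) x ≤ M₂ := by
      apply aux_max_principle _ hΦ.neg M₂ hM₂ (by simp [h0]; linarith)
        (by simpa using hlim.neg)
      intro y hy hMy
      have hMy' : M₂ < -Φ y := hMy
      have hΦy : Φ y < -M₂ := by linarith
      have hd : deriv (fun z => -Φ z) = fun z => -deriv Φ z := by
        funext z; exact deriv.neg
      rw [hd]
      have hd2 : deriv (fun z => -deriv Φ z) y = -deriv (deriv Φ) y := deriv.neg
      rw [hd2, heq y hy]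
      have h1 : ne (-M₂) < ne (Φ y) := hanti hΦy
      have h2 : ρ y ≤ ne (-M₂) := hρM₂ y hy.le
      linarith
    have h' : -Φ x ≤ M₂ := key x hx
    linarith
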